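/- (Sampling formula.) Assume S_μ ∩ ℝ = ∅. Let A♯ be any self-adjoint extension of A with spectrum {x_n} (a countable set of simple eigenvalues whose normalized eigenvectors form an orthonormal basis of H). Then for every φ ∈ H, the function f(z) := φ̂(z) = ⟨ξ(z), φ⟩ satisfies f(z) = Σ_n ( ⟨ξ(z), ξ(x_n)⟩ / ‖ξ(x_n)‖² ) · f(x_n) for all z ∈ ℂ ∖ S_μ, and the series converges uniformly on compact subsets of ℂ ∖ S_μ. -/

import Mathlib

open scoped ComplexConjugate
open Complex

noncomputable section

variable {H : Type*} [NormedAddCommGroup H] [InnerProductSpace ℂ H] [CompleteSpace H]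

local notation "⟪" x ", " y "⟫" => @inner ℂ _ _ x y

/-- The range of `T - z·I`, as a subset of `H`. -/
def ranShift (T : H →ₗ.[ℂ] H) (z : ℂ) : Set H :=
  Set.range fun φ : T.domain => T φ - z • (φ : H)

/-- `ψ` belongs to the kernel of `T - z·I`. -/
def InKerShift (T : H →ₗ.[ℂ] H) (z : ℂ) (ψ : H) : Prop :=
  ∃ h : ψ ∈ T.domain, T ⟨ψ, h⟩ = z • ψ

/-- `H = ran(A - z·I) ∔ span{μ}` (direct algebraic sum): every vector has a unique
decomposition `v = r + c • μ` with `r ∈ ran(A - z·I)`. -/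
def GaugeSplit (A : H →ₗ.[ℂ] H) (μ : H) (z : ℂ) : Prop :=
  ∀ v : H, ∃! c : ℂ, v - c • μ ∈ ranShift A z

/-- The exceptional set `S_μ`. -/
def Smu (A : H →ₗ.[ℂ] H) (μ : H) : Set ℂ := {z | ¬ GaugeSplit A μ z}

/-- `A` is simple: `⋂_{Im z ≠ 0} ran(A - z·I) = {0}`. -/
def IsSimpleOp (A : H →ₗ.[ℂ] H) : Prop :=
  (⋂ z ∈ {w : ℂ | w.im ≠ 0}, ranShift A z) = ({0} : Set H)

/-- `A` is regular: every `z ∈ ℂ` is a point of regular type, i.e. `A - z·I` has a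
bounded inverse on its range. -/
def IsRegularOp (A : H →ₗ.[ℂ] H) : Prop :=
  ∀ z : ℂ, ∃ c : ℝ, 0 < c ∧ ∀ φ : A.domain, c * ‖(φ : H)‖ ≤ ‖A φ - z • (φ : H)‖

/-- `A` has deficiency indices `(1,1)`: for every `z ∈ ℂ`, the kernel of `A* - z·I`
is spanned by a single nonzero vector. -/
def DefIndicesOneOne (A : H →ₗ.[ℂ] H) : Prop :=
  ∀ z : ℂ, ∃ v : H, v ≠ 0 ∧
    {ψ : H | InKerShift A.adjoint z ψ} = {w : H | ∃ c : ℂ, w = c • v}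

/-- `A` is symmetric. -/
def IsSymmetricPOp (A : H →ₗ.[ℂ] H) : Prop :=
  ∀ x y : A.domain, ⟪(A x : H), (y : H)⟫ = ⟪(x : H), (A y : H)⟫

/-- The data of a densely defined, closed, symmetric, simple, regular operator with
deficiency indices (1,1): the setting of Krein's theory. -/
structure KreinOp (H : Type*) [NormedAddCommGroup H] [InnerProductSpace ℂ H]
    [CompleteSpace H] where
  A : H →ₗ.[ℂ] H
  dense : Dense (A.domain : Set H)
  closed : A.IsClosed
  symm : IsSymmetricPOp A
  simple : IsSimpleOp A
  regular : IsRegularOp A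
  defOneOne : DefIndicesOneOne A

/-- `B` is a self-adjoint extension of `A` (within `H`). -/
def IsSAExt (A B : H →ₗ.[ℂ] H) : Prop :=
  A ≤ B ∧ IsSelfAdjoint B

/-- `R z` is, for every `z ∈ res`, the (everywhere defined, bounded) inverse of `B - z·I`;
in particular `res ⊆ ℂ ∖ Sp(B)`. -/
def IsResolventOn (B : H →ₗ.[ℂ] H) (res : Set ℂ) (R : ℂ → H →L[ℂ] H) : Prop :=
  ∀ z ∈ res, (∀ v : H, ∃ h : R z v ∈ B.domain, B ⟨R z v, h⟩ - z • R z v = v)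
    ∧ ∀ φ : B.domain, R z ((B φ : H) - z • (φ : H)) = (φ : H)

/-- `ψ(z) = ψ₀ + (z - z₀)(B - z·I)⁻¹ ψ₀`. -/
def psiFun (R : ℂ → H →L[ℂ] H) (z₀ : ℂ) (ψ₀ : H) (z : ℂ) : H :=
  ψ₀ + (z - z₀) • R z ψ₀

/-- `ξ(z) = ψ(z̄) / ⟪μ, ψ(z̄)⟫`. -/
def xiFun (μ : H) (R : ℂ → H →L[ℂ] H) (z₀ : ℂ) (ψ₀ : H) (z : ℂ) : H :=
  (⟪μ, psiFun R z₀ ψ₀ (conj z)⟫)⁻¹ • psiFun R z₀ ψ₀ (conj z)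

/-- `P` is the orthogonal projection onto `Ker(B - x·I)`. -/
def IsEigenProjection (B : H →ₗ.[ℂ] H) (x : ℝ) (P : H →L[ℂ] H) : Prop :=
  IsSelfAdjoint P ∧ (∀ v : H, P (P v) = P v) ∧ ∀ v : H, (P v = v ↔ InKerShift B (x : ℂ) v)


/-- **Sampling formula.** Assume `S_μ ∩ ℝ = ∅` and let `A♯` be a self-adjoint
extension of `A` whose spectrum is a countable family of simple eigenvalues `{x n}` with
normalized eigenvectors `{e n}` forming an orthonormal basis of `H`. Then for every
`φ ∈ H`, `f(z) := φ̂(z) = ⟪ξ(z), φ⟫` satisfies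
`f(z) = Σ_n (⟪ξ(z), ξ(x n)⟫ / ‖ξ(x n)‖²) f(x n)` on `ℂ ∖ S_μ`, with uniform convergence
of the partial sums on compact subsets of `ℂ ∖ S_μ`. -/
lemma aux_le_adjoint {A B : H →ₗ.[ℂ] H} (hd : Dense (A.domain : Set H))
    (h : IsSAExt A B) : B ≤ A.adjoint := by
  have hsa : B.adjoint = B := h.2
  have hdB : Dense (B.domain : Set H) := h.2.dense_domain
  have hfa : B.adjoint.IsFormalAdjoint B := LinearPMap.adjoint_isFormalAdjoint hdB
  rw [hsa] at hfa
  have hfa2 : A.IsFormalAdjoint B := by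
    intro xa y
    obtain ⟨xb, hxb, hval⟩ := LinearPMap.exists_of_le h.1 xa
    rw [hval, hxb]
    exact hfa xb y
  exact LinearPMap.IsFormalAdjoint.le_adjoint hd hfa2

lemma aux_inKer {A B : H →ₗ.[ℂ] H} (hle : B ≤ A.adjoint) {z : ℂ} {v : H}
    (h : InKerShift B z v) : InKerShift A.adjoint z v := by
  obtain ⟨hm, hv⟩ := h
  refine ⟨hle.1 hm, ?_⟩
  have h2 := hle.2 (x := ⟨v, hm⟩) (y := ⟨v, hle.1 hm⟩) rfl
  rw [← h2]; exact hv

lemma aux_psi {A B' : H →ₗ.[ℂ] H} (hle : B' ≤ A.adjoint)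
    {res' : Set ℂ} {R' : ℂ → H →L[ℂ] H} (hR' : IsResolventOn B' res' R')
    {z₀ : ℂ} (hz₀ : z₀ ∈ res') {ψ₀ : H} (hψ₀ne : ψ₀ ≠ 0)
    (hψ₀ : InKerShift A.adjoint z₀ ψ₀) {w : ℂ} (hw : w ∈ res') :
    InKerShift A.adjoint w (psiFun R' z₀ ψ₀ w) ∧ psiFun R' z₀ ψ₀ w ≠ 0 := by
  obtain ⟨hm₀, hv₀⟩ := hψ₀
  obtain ⟨hmR, hvR⟩ := (hR' w hw).1 ψ₀
  set u := R' w ψ₀ with hu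
  have hmR' : u ∈ A.adjoint.domain := hle.1 hmR
  have hBA : A.adjoint ⟨u, hmR'⟩ = B' ⟨u, hmR⟩ :=
    (hle.2 (x := ⟨u, hmR⟩) (y := ⟨u, hmR'⟩) rfl).symm
  have hB'x : B' ⟨u, hmR⟩ = ψ₀ + w • u := eq_add_of_sub_eq hvR
  constructor
  · have hmem : psiFun R' z₀ ψ₀ w ∈ A.adjoint.domain := by
      simp only [psiFun]
      exact A.adjoint.domain.add_mem hm₀ (A.adjoint.domain.smul_mem _ hmR')
    refine ⟨hmem, ?_⟩
    have hsplit : (⟨psiFun R' z₀ ψ₀ w, hmem⟩ : A.adjoint.domain)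
        = ⟨ψ₀, hm₀⟩ + (w - z₀) • ⟨u, hmR'⟩ := by
      apply Subtype.ext
      simp [psiFun]
      rfl
    rw [hsplit, LinearPMap.map_add, LinearPMap.map_smul, hv₀, hBA, hB'x]
    show z₀ • ψ₀ + (w - z₀) • (ψ₀ + w • u) = w • psiFun R' z₀ ψ₀ w
    simp only [psiFun, ← hu]
    module
  · intro hzero
    simp only [psiFun, ← hu] at hzero
    by_cases hwz : w = z₀
    · rw [hwz, sub_self, zero_smul, add_zero] at hzero
      exact hψ₀ne hzero
    · have hps : ψ₀ = (-(w - z₀)) • u := by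
        rw [neg_smul]
        exact eq_neg_of_add_eq_zero_left hzero
      have hm0B : ψ₀ ∈ B'.domain := by
        rw [hps]; exact B'.domain.smul_mem _ hmR
      have hsub : (⟨ψ₀, hm0B⟩ : B'.domain) = (-(w - z₀)) • ⟨u, hmR⟩ :=
        Subtype.ext (by simpa using hps)
      have h1 : B' ⟨ψ₀, hm0B⟩ = (-(w - z₀)) • (ψ₀ + w • u) := by
        rw [hsub, LinearPMap.map_smul, hB'x]
      have key : (B' ⟨ψ₀, hm0B⟩ : H) - z₀ • ψ₀ = 0 := by
        rw [h1, hps]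
        module
      have h2 := (hR' z₀ hz₀).2 ⟨ψ₀, hm0B⟩
      rw [key] at h2
      simp only [map_zero] at h2
      exact hψ₀ne h2.symm

lemma aux_gauge {A B' : H →ₗ.[ℂ] H} (hd : Dense (A.domain : Set H))
    (hle : B' ≤ A.adjoint)
    {res' : Set ℂ} {R' : ℂ → H →L[ℂ] H} (hR' : IsResolventOn B' res' R')
    {z₀ : ℂ} (hz₀ : z₀ ∈ res') {ψ₀ : H} (hψ₀ne : ψ₀ ≠ 0)
    (hψ₀ : InKerShift A.adjoint z₀ ψ₀) {μ : H} {z : ℂ}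
    (hz : z ∉ Smu A μ) (hz2 : conj z ∈ res') :
    ⟪μ, psiFun R' z₀ ψ₀ (conj z)⟫ ≠ 0 := by
  obtain ⟨⟨hmem, hker⟩, hne⟩ := aux_psi hle hR' hz₀ hψ₀ne hψ₀ hz2
  set Ψ := psiFun R' z₀ ψ₀ (conj z) with hΨ
  intro h0
  have hGS : GaugeSplit A μ z := by
    by_contra hG; exact hz hG
  obtain ⟨c, hc, -⟩ := hGS Ψ
  obtain ⟨φa, hφa⟩ := hc
  have h1 : ⟪Ψ, (A φa : H)⟫ = z * ⟪Ψ, (φa : H)⟫ := by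
    have hfa := (LinearPMap.adjoint_isFormalAdjoint hd) ⟨Ψ, hmem⟩ φa
    rw [hker, inner_smul_left] at hfa
    simpa using hfa.symm
  have h2 : ⟪Ψ, Ψ - c • μ⟫ = 0 := by
    rw [← hφa, inner_sub_right, inner_smul_right, h1]
    ring
  have h3 : ⟪Ψ, μ⟫ = 0 := by
    rw [← inner_conj_symm, h0, map_zero]
  rw [inner_sub_right, inner_smul_right, h3, mul_zero, sub_zero] at h2
  exact hne (inner_self_eq_zero.mp h2)

theorem statement5 [TopologicalSpace.SeparableSpace H]
    (S : KreinOp H)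
    (B : H →ₗ.[ℂ] H) (hB : IsSAExt S.A B)
    (ι : Type) [Countable ι]
    (x : ι → ℝ) (hxinj : Function.Injective x)
    (e : ι → H) (he : ∀ n, e n ≠ 0 ∧ InKerShift B ((x n : ℂ)) (e n))
    (honb : Orthonormal ℂ e)
    (hcompl : ∀ v : H, HasSum (fun n => ⟪e n, v⟫ • e n) v)
    (B' : H →ₗ.[ℂ] H) (hB' : IsSAExt S.A B') (hBB' : B ≠ B')
    (res' : Set ℂ) (R' : ℂ → H →L[ℂ] H) (hR' : IsResolventOn B' res' R')
    (z₀ : ℂ) (hz₀ : z₀ ∈ res')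
    (ψ₀ : H) (hψ₀ne : ψ₀ ≠ 0) (hψ₀ : InKerShift S.A.adjoint z₀ ψ₀)
    (μ : H) (hSmuR : ∀ t : ℝ, (t : ℂ) ∉ Smu S.A μ)
    (hxres' : ∀ n, ((x n : ℝ) : ℂ) ∈ res')
    (φ : H) :
    (∀ z : ℂ, z ∉ Smu S.A μ → conj z ∈ res' →
      HasSum
        (fun n =>
          (⟪xiFun μ R' z₀ ψ₀ z, xiFun μ R' z₀ ψ₀ ((x n : ℝ) : ℂ)⟫
              / ((‖xiFun μ R' z₀ ψ₀ ((x n : ℝ) : ℂ)‖ : ℂ) ^ 2))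
            * ⟪xiFun μ R' z₀ ψ₀ ((x n : ℝ) : ℂ), φ⟫)
        ⟪xiFun μ R' z₀ ψ₀ z, φ⟫)
    ∧ ∀ K : Set ℂ, IsCompact K → K ⊆ {z : ℂ | z ∉ Smu S.A μ ∧ conj z ∈ res'} →
        TendstoUniformlyOn
          (fun (s : Finset ι) (z : ℂ) => ∑ n ∈ s,
            (⟪xiFun μ R' z₀ ψ₀ z, xiFun μ R' z₀ ψ₀ ((x n : ℝ) : ℂ)⟫
                / ((‖xiFun μ R' z₀ ψ₀ ((x n : ℝ) : ℂ)‖ : ℂ) ^ 2))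
              * ⟪xiFun μ R' z₀ ψ₀ ((x n : ℝ) : ℂ), φ⟫)
          (fun z => ⟪xiFun μ R' z₀ ψ₀ z, φ⟫) Filter.atTop K := by
  have hle' : B' ≤ S.A.adjoint := aux_le_adjoint S.dense hB'
  have hleB : B ≤ S.A.adjoint := aux_le_adjoint S.dense hB
  -- `ξ(x n)` is a nonzero multiple of `e n`
  have hxi_e : ∀ n, ∃ t : ℂ, t ≠ 0 ∧ xiFun μ R' z₀ ψ₀ ((x n : ℝ) : ℂ) = t • e n := by
    intro n
    have hconj : conj (((x n : ℝ)) : ℂ) = ((x n : ℝ) : ℂ) := Complex.conj_ofReal _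
    obtain ⟨v, hv0, hvset⟩ := S.defOneOne ((x n : ℝ) : ℂ)
    have he1 : InKerShift S.A.adjoint ((x n : ℝ) : ℂ) (e n) := aux_inKer hleB (he n).2
    obtain ⟨a, ha⟩ := (Set.ext_iff.mp hvset (e n)).mp he1
    have ha0 : a ≠ 0 := by
      intro h; exact (he n).1 (by simp [ha, h])
    have hΨ := aux_psi hle' hR' hz₀ hψ₀ne hψ₀ (hxres' n)
    obtain ⟨b, hb⟩ := (Set.ext_iff.mp hvset _).mp hΨ.1
    have hb0 : b ≠ 0 := by
      intro h; exact hΨ.2 (by simp [hb, h])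
    have hd0 : ⟪μ, psiFun R' z₀ ψ₀ ((x n : ℝ) : ℂ)⟫ ≠ 0 := by
      have := aux_gauge S.dense hle' hR' hz₀ hψ₀ne hψ₀ (hSmuR (x n))
        (by rw [hconj]; exact hxres' n)
      rwa [hconj] at this
    refine ⟨(⟪μ, psiFun R' z₀ ψ₀ ((x n : ℝ) : ℂ)⟫)⁻¹ * (b * a⁻¹),
      mul_ne_zero (inv_ne_zero hd0) (mul_ne_zero hb0 (inv_ne_zero ha0)), ?_⟩
    simp only [xiFun, hconj]
    rw [hb, ha, smul_smul, smul_smul]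
    congr 1
    rw [mul_assoc, inv_mul_cancel_right₀ ha0]
  -- the sampling term simplifies to `⟪u, e n⟫ * ⟪e n, φ⟫`
  have hterm : ∀ (u : H) (n : ι),
      (⟪u, xiFun μ R' z₀ ψ₀ ((x n : ℝ) : ℂ)⟫
          / ((‖xiFun μ R' z₀ ψ₀ ((x n : ℝ) : ℂ)‖ : ℂ) ^ 2))
        * ⟪xiFun μ R' z₀ ψ₀ ((x n : ℝ) : ℂ), φ⟫ = ⟪u, e n⟫ * ⟪e n, φ⟫ := by
    intro u n
    obtain ⟨t, ht0, hts⟩ := hxi_e n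
    have hen : ‖e n‖ = 1 := honb.1 n
    rw [hts, inner_smul_right, inner_smul_left, norm_smul, hen, mul_one]
    have hnorm : ((‖t‖ : ℂ)) ^ 2 = t * (starRingEnd ℂ) t := by
      rw [Complex.mul_conj]
      norm_cast
      rw [Complex.normSq_eq_norm_sq]
    have hct : (starRingEnd ℂ) t ≠ 0 := fun h => ht0 (by simpa using congrArg (starRingEnd ℂ) h)
    rw [hnorm]
    field_simp
  -- Parseval-type expansion
  have hsum : ∀ u : H, HasSum (fun n => ⟪u, e n⟫ * ⟪e n, φ⟫) ⟪u, φ⟫ := by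
    intro u
    have := (hcompl φ).mapL (innerSL ℂ u)
    simpa [inner_smul_right, mul_comm] using this
  constructor
  · intro z hz1 hz2
    simp only [hterm]
    exact hsum _
  · intro K hK hKsub
    -- the resolvent identity
    have hid : ∀ u ∈ res', ∀ w ∈ res', ∀ v : H,
        R' u v - R' w v = (u - w) • R' u (R' w v) := by
      intro u hu w hw v
      obtain ⟨hm, hmv⟩ := (hR' w hw).1 v
      have h2 := (hR' u hu).2 ⟨R' w v, hm⟩
      have h3 : (B' ⟨R' w v, hm⟩ : H) - u • R' w v = v + (w - u) • R' w v := by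
        rw [eq_add_of_sub_eq hmv]
        module
      rw [h3, map_add, map_smul] at h2
      calc R' u v - R' w v
          = R' u v - (R' u v + (w - u) • R' u (R' w v)) := by rw [h2]
        _ = (u - w) • R' u (R' w v) := by module
    -- local boundedness of the resolvent
    have hbound : ∀ w ∈ res', ∀ u ∈ res', dist u w ≤ (2 * (‖R' w‖ + 1))⁻¹ →
        ∀ v : H, ‖R' u v‖ ≤ 2 * ‖R' w v‖ := by
      intro w hw u hu hdu v
      have h1 : R' u v = R' w v + (u - w) • R' w (R' u v) := by
        have h := hid w hw u hu v
        calc R' u v = R' w v - (R' w v - R' u v) := by module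
          _ = R' w v + (u - w) • R' w (R' u v) := by rw [h]; module
      have h4 : ‖R' u v‖ ≤ ‖R' w v‖ + ‖u - w‖ * (‖R' w‖ * ‖R' u v‖) := by
        have hstep : ‖R' u v‖ ≤ ‖R' w v‖ + ‖u - w‖ * ‖R' w (R' u v)‖ := by
          calc ‖R' u v‖ = ‖R' w v + (u - w) • R' w (R' u v)‖ := by rw [← h1]
            _ ≤ ‖R' w v‖ + ‖(u - w) • R' w (R' u v)‖ := norm_add_le _ _
            _ = ‖R' w v‖ + ‖u - w‖ * ‖R' w (R' u v)‖ := by rw [norm_smul]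
        have hop : ‖R' w (R' u v)‖ ≤ ‖R' w‖ * ‖R' u v‖ := (R' w).le_opNorm _
        nlinarith [norm_nonneg (u - w), dist_nonneg (x := u) (y := w)]
      have hdist : ‖u - w‖ = dist u w := (dist_eq_norm u w).symm
      have hRw : (0:ℝ) ≤ ‖R' w‖ := norm_nonneg _
      have hRu : (0:ℝ) ≤ ‖R' u v‖ := norm_nonneg _
      have hd0 : (0:ℝ) ≤ dist u w := dist_nonneg
      have hkey : dist u w * ‖R' w‖ ≤ 1 / 2 := by
        have h5 : (0:ℝ) < 2 * (‖R' w‖ + 1) := by positivity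
        have h6 : dist u w * (2 * (‖R' w‖ + 1)) ≤ 1 := by
          calc dist u w * (2 * (‖R' w‖ + 1))
              ≤ (2 * (‖R' w‖ + 1))⁻¹ * (2 * (‖R' w‖ + 1)) :=
                mul_le_mul_of_nonneg_right hdu (le_of_lt h5)
            _ = 1 := inv_mul_cancel₀ (ne_of_gt h5)
        nlinarith [dist_nonneg (x := u) (y := w), norm_nonneg (R' w)]
      rw [hdist] at h4
      nlinarith
    -- continuity of ξ on the good set
    set Kset : Set ℂ := {z : ℂ | z ∉ Smu S.A μ ∧ conj z ∈ res'} with hKset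
    have hRcont : ContinuousOn (fun z : ℂ => R' (conj z) ψ₀) Kset := by
      intro z hzK
      rw [Metric.continuousWithinAt_iff]
      intro ε hε
      set w := conj z with hw'
      have hw : w ∈ res' := hzK.2
      set C := ‖R' w (R' w ψ₀)‖ with hC'
      have hC0 : (0:ℝ) ≤ C := norm_nonneg _
      refine ⟨min ((2 * (‖R' w‖ + 1))⁻¹) (ε / (2 * C + 1)), by positivity,
        fun u huK hdu => ?_⟩
      have hu : conj u ∈ res' := huK.2
      have hdc : dist (conj u) w = dist u z := by
        rw [hw']; exact Complex.dist_conj_conj u z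
      have h1 : R' (conj u) ψ₀ - R' w ψ₀ = (conj u - w) • R' (conj u) (R' w ψ₀) :=
        hid _ hu _ hw ψ₀
      have hb2 : ‖R' (conj u) (R' w ψ₀)‖ ≤ 2 * C := by
        rw [hC']
        exact hbound w hw (conj u) hu
          (by rw [hdc]; exact le_of_lt (lt_of_lt_of_le hdu (min_le_left _ _))) _
      calc dist (R' (conj u) ψ₀) (R' w ψ₀) = ‖R' (conj u) ψ₀ - R' w ψ₀‖ :=
            dist_eq_norm _ _
        _ = ‖conj u - w‖ * ‖R' (conj u) (R' w ψ₀)‖ := by rw [h1, norm_smul]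
        _ ≤ dist u z * (2 * C) := by
            rw [← hdc, ← dist_eq_norm]
            exact mul_le_mul_of_nonneg_left hb2 dist_nonneg
        _ < ε := by
            have hdu2 : dist u z < ε / (2 * C + 1) := lt_of_lt_of_le hdu (min_le_right _ _)
            have h5 : (0:ℝ) < 2 * C + 1 := by positivity
            rw [lt_div_iff₀ h5] at hdu2
            nlinarith [dist_nonneg (x := u) (y := z)]
    have hΨcont : ContinuousOn (fun z : ℂ => psiFun R' z₀ ψ₀ (conj z)) Kset := by
      simp only [psiFun]
      exact continuousOn_const.add
        (((Complex.continuous_conj.sub continuous_const).continuousOn).smul hRcont)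
    have hinner : ContinuousOn (fun z : ℂ => (⟪μ, psiFun R' z₀ ψ₀ (conj z)⟫ : ℂ)) Kset :=
      continuousOn_const.inner hΨcont
    have hne0 : ∀ z ∈ Kset, ⟪μ, psiFun R' z₀ ψ₀ (conj z)⟫ ≠ 0 := fun z hzK =>
      aux_gauge S.dense hle' hR' hz₀ hψ₀ne hψ₀ hzK.1 hzK.2
    have hcont : ContinuousOn (fun z => xiFun μ R' z₀ ψ₀ z) Kset := by
      simp only [xiFun]
      exact ((hinner.inv₀ hne0).smul hΨcont)
    obtain ⟨C, hC⟩ := hK.exists_bound_of_continuousOn (hcont.mono hKsub)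
    set M := max C 0 with hM'
    have hM : (0:ℝ) ≤ M := le_max_right _ _
    rw [Metric.tendstoUniformlyOn_iff]
    intro ε hε
    have hεM : (0:ℝ) < ε / (M + 1) := by positivity
    have hev : ∀ᶠ s in Filter.atTop,
        dist (∑ n ∈ s, ⟪e n, φ⟫ • e n) φ < ε / (M + 1) :=
      Metric.tendsto_nhds.mp (hcompl φ) _ hεM
    filter_upwards [hev] with s hs z hzK
    have hzKs : z ∈ Kset := hKsub hzK
    have hsumeq : (∑ n ∈ s,
        (⟪xiFun μ R' z₀ ψ₀ z, xiFun μ R' z₀ ψ₀ ((x n : ℝ) : ℂ)⟫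
            / ((‖xiFun μ R' z₀ ψ₀ ((x n : ℝ) : ℂ)‖ : ℂ) ^ 2))
          * ⟪xiFun μ R' z₀ ψ₀ ((x n : ℝ) : ℂ), φ⟫)
        = ⟪xiFun μ R' z₀ ψ₀ z, ∑ n ∈ s, ⟪e n, φ⟫ • e n⟫ := by
      rw [inner_sum]
      refine Finset.sum_congr rfl fun n _ => ?_
      rw [hterm, inner_smul_right]
      ring
    rw [hsumeq, dist_eq_norm, ← inner_sub_right]
    have hb1 : ‖⟪xiFun μ R' z₀ ψ₀ z, φ - ∑ n ∈ s, ⟪e n, φ⟫ • e n⟫‖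
        ≤ ‖xiFun μ R' z₀ ψ₀ z‖ * ‖φ - ∑ n ∈ s, ⟪e n, φ⟫ • e n‖ :=
      norm_inner_le_norm _ _
    have hb2 : ‖φ - ∑ n ∈ s, ⟪e n, φ⟫ • e n‖ < ε / (M + 1) := by
      rw [norm_sub_rev, ← dist_eq_norm]
      exact hs
    have hb3 : ‖xiFun μ R' z₀ ψ₀ z‖ ≤ M := le_trans (hC z hzK) (le_max_left _ _)
    have hfin : M * (ε / (M + 1)) < ε := by
      have h5 : (0:ℝ) < M + 1 := by linarith
      rw [mul_div_assoc', div_lt_iff₀ h5]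
      nlinarith
    calc ‖⟪xiFun μ R' z₀ ψ₀ z, φ - ∑ n ∈ s, ⟪e n, φ⟫ • e n⟫‖
        ≤ ‖xiFun μ R' z₀ ψ₀ z‖ * ‖φ - ∑ n ∈ s, ⟪e n, φ⟫ • e n‖ := hb1
      _ ≤ M * (ε / (M + 1)) := by
          apply mul_le_mul hb3 (le_of_lt hb2) (norm_nonneg _) hM
      _ < ε := hfin


end
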